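/- arXiv:2010.00848 — 3 statements merged into one kernel-verified Lean document; each statement's English description precedes it below -/
import Mathlib

section
/- For the ℓ₀ 'norm' (cardinality of the support), the set of minimizers of y ↦ ‖y‖₀ + (1/(2γ))‖y−u‖₂² contains the point x given coordinatewise by xᵢ = 0 if |uᵢ| ≤ √(2γ) and xᵢ = uᵢ if |uᵢ| > √(2γ) (the hard-thresholding operator). -/
open scoped BigOperators
open Classical in
/-- the hard-thresholding point `x` (with `x i = 0` if
`|u i| ≤ √(2γ)` and `x i = u i` otherwise) is a minimizer of
`y ↦ ‖y‖₀ + (1/(2γ))‖y−u‖₂²`, where `‖y‖₀` counts nonzero coordinates. -/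
theorem hard_thresholding_mem_prox_l0
    (n : ℕ) (γ : ℝ) (hγ : 0 < γ) (u : Fin n → ℝ) :
    let x : Fin n → ℝ := fun i => if |u i| ≤ Real.sqrt (2 * γ) then 0 else u i
    ∀ y : Fin n → ℝ,
      ((Finset.univ.filter fun i => x i ≠ 0).card : ℝ)
          + (1 / (2 * γ)) * ∑ i, (x i - u i) ^ 2
        ≤ ((Finset.univ.filter fun i => y i ≠ 0).card : ℝ)
          + (1 / (2 * γ)) * ∑ i, (y i - u i) ^ 2 := by
  intro x y
  have hc : (0:ℝ) < 1 / (2 * γ) := by positivity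
  have key : ∀ i, (if x i ≠ 0 then (1:ℝ) else 0) + (1/(2*γ)) * (x i - u i)^2
      ≤ (if y i ≠ 0 then (1:ℝ) else 0) + (1/(2*γ)) * (y i - u i)^2 := by
    intro i
    have h2γ : (0:ℝ) ≤ 2 * γ := by positivity
    by_cases h : |u i| ≤ Real.sqrt (2 * γ)
    · have hx : x i = 0 := if_pos h
      have hu2 : (u i)^2 ≤ 2 * γ := by
        have hs := Real.sq_sqrt h2γ
        nlinarith [sq_abs (u i), abs_nonneg (u i), Real.sqrt_nonneg (2*γ)]
      have hcu : (1/(2*γ)) * (u i)^2 ≤ 1 := by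
        rw [div_mul_eq_mul_div, one_mul, div_le_one (by positivity)]
        exact hu2
      rw [hx, if_neg (by norm_num : ¬(0:ℝ) ≠ 0)]
      by_cases hy : y i ≠ 0
      · rw [if_pos hy]
        have : (0:ℝ) ≤ (1/(2*γ)) * (y i - u i)^2 := by positivity
        nlinarith
      · push_neg at hy
        simp [hy]
    · have hx : x i = u i := if_neg h
      push_neg at h
      have hu0 : u i ≠ 0 :=
        abs_pos.mp ((Real.sqrt_nonneg (2*γ)).trans_lt h)
      have hu2 : 2 * γ < (u i)^2 := by
        have := Real.sq_sqrt h2γ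
        nlinarith [Real.sqrt_nonneg (2*γ), sq_abs (u i), abs_nonneg (u i)]
      rw [hx, if_pos hu0]
      by_cases hy : y i ≠ 0
      · rw [if_pos hy]
        have : (0:ℝ) ≤ (1/(2*γ)) * (y i - u i)^2 := by positivity
        nlinarith
      · push_neg at hy
        rw [hy, if_neg (by norm_num : ¬(0:ℝ) ≠ 0)]
        have : (1:ℝ) ≤ (1/(2*γ)) * (u i)^2 := by
          rw [div_mul_eq_mul_div, one_mul, le_div_iff₀ (by positivity)]
          nlinarith
        nlinarith
  have hsum := Finset.sum_le_sum (s := Finset.univ) (fun i _ => key i)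
  have cardx : ((Finset.univ.filter fun i => x i ≠ 0).card : ℝ)
      = ∑ i, (if x i ≠ 0 then (1:ℝ) else 0) := by
    rw [Finset.card_filter]; push_cast; rfl
  have cardy : ((Finset.univ.filter fun i => y i ≠ 0).card : ℝ)
      = ∑ i, (if y i ≠ 0 then (1:ℝ) else 0) := by
    rw [Finset.card_filter]; push_cast; rfl
  rw [cardx, cardy, Finset.mul_sum, Finset.mul_sum, ← Finset.sum_add_distrib,
    ← Finset.sum_add_distrib]
  exact hsum
end

section
/- Enlarged identification: Let C = {M₁,…,M_p} be a finite collection of closed subsets of ℝⁿ, g proper convex lsc with single-valued prox, and suppose a sequence (u_k) converges to u* with x_k = prox_{γg}(u_k) and x* = prox_{γg}(u*). Then for every ε > 0 there exists K such that for all k > K and all i: S(x*)ᵢ ≤ S(x_k)ᵢ ≤ max{ S(prox_{γg}(u))ᵢ : ‖u − u*‖ ≤ ε }. -/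
open Classical in
/-- The sparsity vector of `x` relative to the collection `M`:
`S x i = 0` if `x ∈ M i` and `1` otherwise. -/
noncomputable def sparsityVec {E : Type*} {p : ℕ} (M : Fin p → Set E)
    (x : E) (i : Fin p) : ℕ :=
  if x ∈ M i then 0 else 1

set_option maxHeartbeats 1000000 in
/-- enlarged identification. With `M₁,…,M_p` closed, `g` proper
convex lsc, `prx` its (single-valued) proximal operator with parameter
`γ > 0`, `u_k → u*`, `x_k = prox_{γg}(u_k)` and `x* = prox_{γg}(u*)`: for
every `ε > 0` there is `K` such that for all `k > K` and all `i`,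
`S(x*)ᵢ ≤ S(x_k)ᵢ ≤ max{ S(prox_{γg}(u))ᵢ : ‖u − u*‖ ≤ ε }`. -/
theorem enlarged_identification
    (n p : ℕ) (M : Fin p → Set (EuclideanSpace ℝ (Fin n)))
    (hM : ∀ i, IsClosed (M i))
    (g : EuclideanSpace ℝ (Fin n) → EReal)
    (hproper : ∃ x, g x ≠ ⊤)
    (hnobot : ∀ x, g x ≠ ⊥)
    (hconv : ∀ x y : EuclideanSpace ℝ (Fin n), ∀ a b : ℝ,
      0 ≤ a → 0 ≤ b → a + b = 1 →
      g (a • x + b • y) ≤ (a : EReal) * g x + (b : EReal) * g y)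
    (hlsc : LowerSemicontinuous g)
    (γ : ℝ) (hγ : 0 < γ)
    (prx : EuclideanSpace ℝ (Fin n) → EuclideanSpace ℝ (Fin n))
    (hprx : ∀ u y : EuclideanSpace ℝ (Fin n),
      g (prx u) + (((1 / (2 * γ)) * ‖prx u - u‖ ^ 2 : ℝ) : EReal)
        ≤ g y + (((1 / (2 * γ)) * ‖y - u‖ ^ 2 : ℝ) : EReal))
    (u : ℕ → EuclideanSpace ℝ (Fin n)) (ustar : EuclideanSpace ℝ (Fin n))
    (hu : Filter.Tendsto u Filter.atTop (nhds ustar)) :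
    ∀ ε : ℝ, 0 < ε → ∃ K : ℕ, ∀ k > K, ∀ i : Fin p,
      sparsityVec M (prx ustar) i ≤ sparsityVec M (prx (u k)) i ∧
      sparsityVec M (prx (u k)) i ≤
        sSup {m : ℕ | ∃ v : EuclideanSpace ℝ (Fin n),
          ‖v - ustar‖ ≤ ε ∧ sparsityVec M (prx v) i = m} := by
  intro ε hε
  set c : ℝ := 1 / (2 * γ) with hc
  have hcpos : 0 < c := by positivity
  obtain ⟨x₀, hx₀⟩ := hproper
  -- g (prx v) is finite for every v
  have hfin : ∀ v, ∃ a : ℝ, g (prx v) = (a : EReal) := by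
    intro v
    have h := hprx v x₀
    have htop : g (prx v) ≠ ⊤ := by
      intro ht
      rw [ht] at h
      have hrhs : g x₀ + (((c * ‖x₀ - v‖ ^ 2 : ℝ)) : EReal) ≠ ⊤ :=
        (EReal.add_lt_top hx₀ (EReal.coe_ne_top _)).ne
      have hlhs : (⊤ : EReal) + (((c * ‖prx v - v‖ ^ 2 : ℝ)) : EReal) = ⊤ :=
        EReal.top_add_of_ne_bot (EReal.coe_ne_bot _)
      rw [hlhs] at h
      exact hrhs (top_le_iff.mp h)
    exact ⟨(g (prx v)).toReal, (EReal.coe_toReal htop (hnobot _)).symm⟩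
  -- quadratic growth of the prox objective
  have growth : ∀ v z, ∀ a b : ℝ, g (prx v) = (a : EReal) → g z = (b : EReal) →
      a + c * ‖prx v - v‖ ^ 2 + (c / 2) * ‖prx v - z‖ ^ 2 ≤ b + c * ‖z - v‖ ^ 2 := by
    intro v z a b ha hb
    set x := prx v with hx
    set m := ((1 : ℝ) / 2) • x + ((1 : ℝ) / 2) • z with hm
    have hgm : g m ≤ ((a / 2 + b / 2 : ℝ) : EReal) := by
      have h := hconv x z (1 / 2) (1 / 2) (by norm_num) (by norm_num) (by norm_num)
      rw [ha, hb] at h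
      calc g m ≤ ((1 / 2 : ℝ) : EReal) * (a : EReal) + ((1 / 2 : ℝ) : EReal) * (b : EReal) := h
        _ = ((a / 2 + b / 2 : ℝ) : EReal) := by
            norm_cast
            ring
    have hgmtop : g m ≠ ⊤ := by
      intro ht
      rw [ht] at hgm
      exact EReal.coe_ne_top _ (top_le_iff.mp hgm)
    obtain ⟨gm, hgmeq⟩ : ∃ gm : ℝ, g m = (gm : EReal) :=
      ⟨(g m).toReal, (EReal.coe_toReal hgmtop (hnobot _)).symm⟩
    have hgmle : gm ≤ a / 2 + b / 2 := by
      rw [hgmeq] at hgm; exact_mod_cast hgm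
    have hineq : a + c * ‖x - v‖ ^ 2 ≤ gm + c * ‖m - v‖ ^ 2 := by
      have h := hprx v m
      rw [ha, hgmeq, ← hx] at h
      rw [← EReal.coe_add, ← EReal.coe_add] at h
      exact_mod_cast h
    -- parallelogram identity for the midpoint
    have hmid : ‖m - v‖ ^ 2 =
        (1 / 2) * ‖x - v‖ ^ 2 + (1 / 2) * ‖z - v‖ ^ 2 - (1 / 4) * ‖x - z‖ ^ 2 := by
      have hmv : m - v = ((1 : ℝ) / 2) • ((x - v) + (z - v)) := by
        rw [hm]; module
      have hxz : (x - v) - (z - v) = x - z := by abel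
      have hpar := parallelogram_law_with_norm ℝ (x - v) (z - v)
      rw [hxz] at hpar
      have hnm : ‖m - v‖ = (1 / 2) * ‖(x - v) + (z - v)‖ := by
        rw [hmv, norm_smul]; simp
      nlinarith [sq_nonneg ‖(x - v) + (z - v)‖, norm_nonneg ((x - v) + (z - v))]
    nlinarith [hineq, hgmle, hmid]
  -- prx is 2-Lipschitz
  have lip : ∀ v w, ‖prx v - prx w‖ ≤ 2 * ‖v - w‖ := by
    intro v w
    obtain ⟨a, ha⟩ := hfin v
    obtain ⟨b, hb⟩ := hfin w
    have h1 := growth v (prx w) a b ha hb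
    have h2 := growth w (prx v) b a hb ha
    set x := prx v
    set y := prx w
    have hrev : ‖y - x‖ ^ 2 = ‖x - y‖ ^ 2 := by rw [norm_sub_rev]
    -- expand the norms via inner products
    have e : ∀ s t : EuclideanSpace ℝ (Fin n),
        ‖s - t‖ ^ 2 = ‖s‖ ^ 2 - 2 * (inner ℝ s t : ℝ) + ‖t‖ ^ 2 := fun s t =>
      norm_sub_sq_real s t
    have hiden : ‖y - v‖ ^ 2 + ‖x - w‖ ^ 2 - ‖x - v‖ ^ 2 - ‖y - w‖ ^ 2 =
        2 * (inner ℝ (x - y) (v - w) : ℝ) := by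
      rw [e y v, e x w, e x v, e y w, inner_sub_left, inner_sub_right, inner_sub_right]
      ring
    have hcs : (inner ℝ (x - y) (v - w) : ℝ) ≤ ‖x - y‖ * ‖v - w‖ := real_inner_le_norm _ _
    have hkey : ‖x - y‖ ^ 2 ≤ 2 * (‖x - y‖ * ‖v - w‖) := by
      have hdiff : c * (‖y - v‖ ^ 2 + ‖x - w‖ ^ 2 - ‖x - v‖ ^ 2 - ‖y - w‖ ^ 2)
            - c * ‖x - y‖ ^ 2 =
          ((b + c * ‖y - v‖ ^ 2) - (a + c * ‖x - v‖ ^ 2 + c / 2 * ‖x - y‖ ^ 2))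
          + ((a + c * ‖x - w‖ ^ 2) - (b + c * ‖y - w‖ ^ 2 + c / 2 * ‖y - x‖ ^ 2)) := by
        rw [hrev]; ring
      have hsum : c * ‖x - y‖ ^ 2 ≤
          c * (‖y - v‖ ^ 2 + ‖x - w‖ ^ 2 - ‖x - v‖ ^ 2 - ‖y - w‖ ^ 2) := by
        linarith [h1, h2, hdiff]
      have hs2 := (mul_le_mul_iff_right₀ hcpos).mp hsum
      rw [hiden] at hs2
      linarith [hcs]
    rcases eq_or_lt_of_le (norm_nonneg (x - y)) with h0 | h0
    · rw [← h0]; positivity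
    · nlinarith [norm_nonneg (v - w)]
  -- convergence of the prox sequence
  have hu0 : Filter.Tendsto (fun k => ‖u k - ustar‖) Filter.atTop (nhds 0) :=
    tendsto_iff_norm_sub_tendsto_zero.mp hu
  have hx : Filter.Tendsto (fun k => prx (u k)) Filter.atTop (nhds (prx ustar)) := by
    rw [tendsto_iff_norm_sub_tendsto_zero]
    have h2 : Filter.Tendsto (fun k => 2 * ‖u k - ustar‖) Filter.atTop (nhds 0) := by
      have h3 := hu0.const_mul (2 : ℝ)
      rw [mul_zero] at h3
      exact h3
    exact squeeze_zero (fun k => norm_nonneg _) (fun k => lip (u k) ustar) h2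
  -- eventual statements
  have hev1 : ∀ᶠ k in Filter.atTop,
      ∀ i : Fin p, prx ustar ∉ M i → prx (u k) ∉ M i := by
    rw [Filter.eventually_all]
    intro i
    by_cases hmem : prx ustar ∈ M i
    · exact Filter.Eventually.of_forall fun k h => absurd hmem h
    · have hopen : (M i)ᶜ ∈ nhds (prx ustar) :=
        (hM i).isOpen_compl.mem_nhds hmem
      exact (hx.eventually hopen).mono fun k hk _ => hk
  have hev2 : ∀ᶠ k in Filter.atTop, ‖u k - ustar‖ ≤ ε :=
    (hu0.eventually (gt_mem_nhds hε)).mono fun k hk => le_of_lt hk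
  obtain ⟨K, hK⟩ := Filter.eventually_atTop.mp (hev1.and hev2)
  refine ⟨K, fun k hk i => ?_⟩
  obtain ⟨h1, h2⟩ := hK k hk.le
  constructor
  · unfold sparsityVec
    by_cases hmem : prx ustar ∈ M i
    · simp [hmem]
    · simp [hmem, h1 i hmem]
  · have hb : BddAbove {m : ℕ | ∃ v : EuclideanSpace ℝ (Fin n),
        ‖v - ustar‖ ≤ ε ∧ sparsityVec M (prx v) i = m} := by
      refine ⟨1, fun m hm => ?_⟩
      obtain ⟨v, _, rfl⟩ := hm
      unfold sparsityVec
      split <;> simp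
    exact le_csSup hb ⟨u k, h2, rfl⟩
end

section
/- The proximal operator of the nuclear norm acts by soft-thresholding singular values: if U = V diag(σ) W* is a singular value decomposition of U, then X = V diag(ν) W* with νᵢ = max(σᵢ − γ, 0) minimizes X ↦ ‖X‖* + (1/(2γ))‖X − U‖_F² over matrices, where ‖X‖* is the sum of singular values. -/
open scoped BigOperators

/-- The rectangular "diagonal" matrix with diagonal entries `σ 0, σ 1, …`. -/
def rectDiag (r c : ℕ) (σ : ℕ → ℝ) : Matrix (Fin r) (Fin c) ℝ :=
  Matrix.of fun i j => if (i : ℕ) = (j : ℕ) then σ (i : ℕ) else 0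

namespace PNN

/-- value of a vector at a natural index, 0 out of range -/
def colf {n : ℕ} (v : Fin n → ℝ) : ℕ → ℝ := fun k => if h : k < n then v ⟨k, h⟩ else 0

lemma colf_fin {n : ℕ} (v : Fin n → ℝ) (j : Fin n) : colf v (j : ℕ) = v j := by
  simp [colf, j.isLt]

lemma sum_fin_ite (c r : ℕ) (h : ℕ → ℝ) :
    ∑ j : Fin c, (if (j : ℕ) < r then h (j : ℕ) else 0) = ∑ k : Fin (min r c), h (k : ℕ) := by
  rw [Fin.sum_univ_eq_sum_range (fun n => if n < r then h n else 0) c,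
    Fin.sum_univ_eq_sum_range (fun n => h n) (min r c), ← Finset.sum_filter]
  congr 1
  ext x
  simp [Nat.lt_min, and_comm]

/-- expansion of V * rectDiag f * Wᵀ entrywise -/
lemma triple_apply {r c : ℕ} (A : Matrix (Fin r) (Fin r) ℝ) (f : ℕ → ℝ)
    (B : Matrix (Fin c) (Fin c) ℝ) (p : Fin r) (q : Fin c) :
    (A * rectDiag r c f * B.transpose) p q
      = ∑ k : Fin (min r c), f (k : ℕ) * colf (A p) (k : ℕ) * colf (B q) (k : ℕ) := by
  rw [Matrix.mul_apply]
  have h1 : ∀ j : Fin c, (A * rectDiag r c f) p j * B.transpose j q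
      = (if (j : ℕ) < r then (fun n => f n * colf (A p) n * colf (B q) n) (j : ℕ) else 0) := by
    intro j
    rw [Matrix.mul_apply]
    by_cases hj : (j : ℕ) < r
    · rw [if_pos hj]
      rw [Finset.sum_eq_single (⟨(j : ℕ), hj⟩ : Fin r)]
      · beta_reduce
        rw [show colf (A p) ((j : ℕ)) = A p ⟨(j : ℕ), hj⟩ from dif_pos hj,
          show colf (B q) ((j : ℕ)) = B q j from dif_pos j.isLt]
        rw [show rectDiag r c f ⟨(j : ℕ), hj⟩ j = f (j : ℕ) from if_pos rfl,
          Matrix.transpose_apply]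
        ring
      · intro b _ hb
        have : ((b : ℕ) = (j : ℕ)) → False := by
          intro hbj
          exact hb (Fin.ext hbj)
        simp [rectDiag, this]
        intro hc; exact absurd hc this
      · intro hmem; exact absurd (Finset.mem_univ _) hmem
    · rw [if_neg hj]
      have : ∀ i : Fin r, A p i * rectDiag r c f i j = 0 := by
        intro i
        have : ((i : ℕ) = (j : ℕ)) → False := by
          intro hij; exact hj (hij ▸ i.isLt)
        simp [rectDiag, this]
        intro hc; exact absurd hc this
      simp only [this, Finset.sum_const_zero, zero_mul]
  calc ∑ j : Fin c, (A * rectDiag r c f) p j * B.transpose j q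
      = ∑ j : Fin c, (if (j : ℕ) < r then (fun n => f n * colf (A p) n * colf (B q) n) (j : ℕ) else 0) := by
        exact Finset.sum_congr rfl (fun j _ => h1 j)
    _ = ∑ k : Fin (min r c), f (k : ℕ) * colf (A p) (k : ℕ) * colf (B q) (k : ℕ) :=
        sum_fin_ite c r (fun n => f n * colf (A p) n * colf (B q) n)

end PNN

namespace PNN

variable {r c : ℕ}

/-- cast from the diagonal index into rows / columns -/
def cr (r c : ℕ) : Fin (min r c) → Fin r := Fin.castLE (min_le_left r c)
def cc (r c : ℕ) : Fin (min r c) → Fin c := Fin.castLE (min_le_right r c)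

lemma colf_cr (v : Fin r → ℝ) (k : Fin (min r c)) : colf v ((k : ℕ)) = v (cr r c k) :=
  dif_pos _

lemma colf_cc (v : Fin c → ℝ) (k : Fin (min r c)) : colf v ((k : ℕ)) = v (cc r c k) :=
  dif_pos _

lemma inner_eq (A V : Matrix (Fin r) (Fin r) ℝ) (B W : Matrix (Fin c) (Fin c) ℝ)
    (f g : ℕ → ℝ) :
    ∑ p : Fin r, ∑ q : Fin c,
        (A * rectDiag r c f * B.transpose) p q * (V * rectDiag r c g * W.transpose) p q
      = ∑ k : Fin (min r c), ∑ l : Fin (min r c),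
          f (k : ℕ) * g (l : ℕ) * (∑ p : Fin r, A p (cr r c k) * V p (cr r c l))
            * (∑ q : Fin c, B q (cc r c k) * W q (cc r c l)) := by
  have step1 : ∀ p q, (A * rectDiag r c f * B.transpose) p q
      * (V * rectDiag r c g * W.transpose) p q
      = ∑ k : Fin (min r c), ∑ l : Fin (min r c),
          (f (k : ℕ) * g (l : ℕ)) * ((A p (cr r c k) * V p (cr r c l))
            * (B q (cc r c k) * W q (cc r c l))) := by
    intro p q
    rw [triple_apply, triple_apply, Finset.sum_mul_sum]
    refine Finset.sum_congr rfl fun k _ => Finset.sum_congr rfl fun l _ => ?_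
    rw [colf_cr (A p) k, colf_cc (B q) k, colf_cr (V p) l, colf_cc (W q) l]
    ring
  calc ∑ p : Fin r, ∑ q : Fin c, (A * rectDiag r c f * B.transpose) p q
        * (V * rectDiag r c g * W.transpose) p q
      = ∑ p : Fin r, ∑ q : Fin c, ∑ k : Fin (min r c), ∑ l : Fin (min r c),
          (f (k : ℕ) * g (l : ℕ)) * ((A p (cr r c k) * V p (cr r c l))
            * (B q (cc r c k) * W q (cc r c l))) :=
        Finset.sum_congr rfl fun p _ => Finset.sum_congr rfl fun q _ => step1 p q
    _ = ∑ p : Fin r, ∑ k : Fin (min r c), ∑ l : Fin (min r c), ∑ q : Fin c,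
          (f (k : ℕ) * g (l : ℕ)) * ((A p (cr r c k) * V p (cr r c l))
            * (B q (cc r c k) * W q (cc r c l))) := by
        refine Finset.sum_congr rfl fun p _ => ?_
        rw [Finset.sum_comm]
        exact Finset.sum_congr rfl fun k _ => Finset.sum_comm
    _ = ∑ k : Fin (min r c), ∑ l : Fin (min r c), ∑ p : Fin r, ∑ q : Fin c,
          (f (k : ℕ) * g (l : ℕ)) * ((A p (cr r c k) * V p (cr r c l))
            * (B q (cc r c k) * W q (cc r c l))) := by
        rw [Finset.sum_comm]
        exact Finset.sum_congr rfl fun k _ => Finset.sum_comm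
    _ = ∑ k : Fin (min r c), ∑ l : Fin (min r c),
          f (k : ℕ) * g (l : ℕ) * (∑ p : Fin r, A p (cr r c k) * V p (cr r c l))
            * (∑ q : Fin c, B q (cc r c k) * W q (cc r c l)) := by
        refine Finset.sum_congr rfl fun k _ => Finset.sum_congr rfl fun l _ => ?_
        rw [mul_assoc, Finset.sum_mul_sum]
        simp_rw [Finset.mul_sum]

end PNN

namespace PNN

variable {r c : ℕ}

lemma sum_col_mul_col {A V : Matrix (Fin r) (Fin r) ℝ} (i j : Fin r) :
    ∑ p : Fin r, A p i * V p j = (A.transpose * V) i j := by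
  simp [Matrix.mul_apply, Matrix.transpose_apply]

lemma inner_same (V : Matrix (Fin r) (Fin r) ℝ) (W : Matrix (Fin c) (Fin c) ℝ)
    (f g : ℕ → ℝ) (hV' : V.transpose * V = 1) (hW' : W.transpose * W = 1) :
    ∑ p : Fin r, ∑ q : Fin c,
        (V * rectDiag r c f * W.transpose) p q * (V * rectDiag r c g * W.transpose) p q
      = ∑ k : Fin (min r c), f (k : ℕ) * g (k : ℕ) := by
  rw [inner_eq]
  have hrr : ∀ k l : Fin (min r c), (∑ p : Fin r, V p (cr r c k) * V p (cr r c l))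
      = if k = l then (1:ℝ) else 0 := by
    intro k l
    rw [sum_col_mul_col, hV', Matrix.one_apply]
    congr 1
    simp only [eq_iff_iff]
    constructor
    · intro h; exact Fin.castLE_injective _ h
    · intro h; exact congrArg _ h
  have hcc : ∀ k l : Fin (min r c), (∑ q : Fin c, W q (cc r c k) * W q (cc r c l))
      = if k = l then (1:ℝ) else 0 := by
    intro k l
    rw [sum_col_mul_col, hW', Matrix.one_apply]
    congr 1
    simp only [eq_iff_iff]
    constructor
    · intro h; exact Fin.castLE_injective _ h
    · intro h; exact congrArg _ h
  refine Finset.sum_congr rfl fun k _ => ?_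
  rw [Finset.sum_eq_single k]
  · rw [hrr k k, hcc k k]; simp
  · intro l _ hlk
    rw [hrr k l, hcc k l, if_neg (fun h => hlk h.symm)]
    ring
  · intro h; exact absurd (Finset.mem_univ _) h

end PNN

namespace PNN

variable {r c : ℕ}

lemma row_sq_sum {A V : Matrix (Fin r) (Fin r) ℝ} (hA : A.transpose * A = 1)
    (hVV : V * V.transpose = 1) (i : Fin r) :
    ∑ j : Fin r, (A.transpose * V) i j ^ 2 = 1 := by
  have hP : (A.transpose * V) * (A.transpose * V).transpose = 1 := by
    rw [Matrix.transpose_mul, Matrix.transpose_transpose, mul_assoc, ← Matrix.mul_assoc V,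
      hVV, Matrix.one_mul, hA]
  have : ((A.transpose * V) * (A.transpose * V).transpose) i i = 1 := by
    rw [hP]; simp [Matrix.one_apply]
  rw [← this, Matrix.mul_apply]
  exact Finset.sum_congr rfl fun j _ => by rw [Matrix.transpose_apply]; ring

lemma sub_sq_sum_le {m n : ℕ} (P : Matrix (Fin n) (Fin n) ℝ) (i : Fin n)
    (e : Fin m → Fin n) (he : Function.Injective e)
    (hrow : ∑ j : Fin n, P i j ^ 2 = 1) :
    ∑ l : Fin m, P i (e l) ^ 2 ≤ 1 := by
  rw [← hrow]
  calc ∑ l : Fin m, P i (e l) ^ 2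
      = ∑ j ∈ Finset.univ.map ⟨e, he⟩, P i j ^ 2 := by rw [Finset.sum_map]; rfl
    _ ≤ ∑ j : Fin n, P i j ^ 2 :=
        Finset.sum_le_sum_of_subset_of_nonneg (Finset.subset_univ _)
          (fun _ _ _ => sq_nonneg _)

lemma inner_le (A V : Matrix (Fin r) (Fin r) ℝ) (B W : Matrix (Fin c) (Fin c) ℝ)
    (τ d : ℕ → ℝ) (γ : ℝ) (hγ : 0 ≤ γ)
    (hA : A.transpose * A = 1) (hVV : V * V.transpose = 1)
    (hB : B.transpose * B = 1) (hWW : W * W.transpose = 1)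
    (hτ : ∀ i, 0 ≤ τ i) (hd0 : ∀ i, 0 ≤ d i) (hdγ : ∀ i, d i ≤ γ) :
    ∑ p : Fin r, ∑ q : Fin c,
        (A * rectDiag r c τ * B.transpose) p q * (V * rectDiag r c d * W.transpose) p q
      ≤ γ * ∑ k : Fin (min r c), τ (k : ℕ) := by
  rw [inner_eq]
  set P := A.transpose * V with hPdef
  set Q := B.transpose * W with hQdef
  have hProw := row_sq_sum hA hVV
  have hQrow := row_sq_sum hB hWW
  have hk : ∀ k : Fin (min r c),
      ∑ l : Fin (min r c), d (l : ℕ) * (P (cr r c k) (cr r c l) * Q (cc r c k) (cc r c l))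
        ≤ γ := by
    intro k
    set x : Fin (min r c) → ℝ := fun l => P (cr r c k) (cr r c l) with hx
    set y : Fin (min r c) → ℝ := fun l => Q (cc r c k) (cc r c l) with hy
    have h1 : ∑ l : Fin (min r c), d (l : ℕ) * (x l * y l)
        ≤ ∑ l : Fin (min r c), γ * (|x l| * |y l|) := by
      refine Finset.sum_le_sum fun l _ => ?_
      calc d (l : ℕ) * (x l * y l) ≤ d (l : ℕ) * (|x l| * |y l|) := by
            refine mul_le_mul_of_nonneg_left ?_ (hd0 _)
            rw [← abs_mul]; exact le_abs_self _
        _ ≤ γ * (|x l| * |y l|) :=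
            mul_le_mul_of_nonneg_right (hdγ _) (by positivity)
    have hxs : ∑ l : Fin (min r c), x l ^ 2 ≤ 1 :=
      sub_sq_sum_le P (cr r c k) (cr r c) (Fin.castLE_injective _) (hProw _)
    have hys : ∑ l : Fin (min r c), y l ^ 2 ≤ 1 :=
      sub_sq_sum_le Q (cc r c k) (cc r c) (Fin.castLE_injective _) (hQrow _)
    have h2 : ∑ l : Fin (min r c), |x l| * |y l| ≤ 1 := by
      have hcs : (∑ l : Fin (min r c), |x l| * |y l|) ^ 2
          ≤ (∑ l : Fin (min r c), x l ^ 2) * ∑ l : Fin (min r c), y l ^ 2 := by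
        simpa [sq_abs] using
          Finset.sum_mul_sq_le_sq_mul_sq Finset.univ (fun l => |x l|) (fun l => |y l|)
      have hnn : 0 ≤ ∑ l : Fin (min r c), |x l| * |y l| :=
        Finset.sum_nonneg fun l _ => by positivity
      nlinarith [hxs, hys, Finset.sum_nonneg (fun l (_ : l ∈ Finset.univ) =>
        sq_nonneg (x l)), Finset.sum_nonneg (fun l (_ : l ∈ Finset.univ) => sq_nonneg (y l))]
    calc ∑ l : Fin (min r c), d (l : ℕ) * (x l * y l)
        ≤ ∑ l : Fin (min r c), γ * (|x l| * |y l|) := h1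
      _ = γ * ∑ l : Fin (min r c), |x l| * |y l| := by rw [Finset.mul_sum]
      _ ≤ γ * 1 := mul_le_mul_of_nonneg_left h2 hγ
      _ = γ := mul_one γ
  calc ∑ k : Fin (min r c), ∑ l : Fin (min r c),
        τ (k : ℕ) * d (l : ℕ) * (∑ p : Fin r, A p (cr r c k) * V p (cr r c l))
          * (∑ q : Fin c, B q (cc r c k) * W q (cc r c l))
      = ∑ k : Fin (min r c), τ (k : ℕ) *
          ∑ l : Fin (min r c), d (l : ℕ) * (P (cr r c k) (cr r c l) * Q (cc r c k) (cc r c l)) := by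
        refine Finset.sum_congr rfl fun k _ => ?_
        rw [Finset.mul_sum]
        refine Finset.sum_congr rfl fun l _ => ?_
        rw [sum_col_mul_col, show (∑ q : Fin c, B q (cc r c k) * W q (cc r c l))
          = (B.transpose * W) (cc r c k) (cc r c l) from by
            simp [Matrix.mul_apply, Matrix.transpose_apply]]
        ring
    _ ≤ ∑ k : Fin (min r c), τ (k : ℕ) * γ := by
        refine Finset.sum_le_sum fun k _ => ?_
        exact mul_le_mul_of_nonneg_left (hk k) (hτ _)
    _ = γ * ∑ k : Fin (min r c), τ (k : ℕ) := by
        rw [Finset.mul_sum]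
        exact Finset.sum_congr rfl fun k _ => mul_comm _ _
end PNN

namespace PNN

lemma rectDiag_transpose (r c : ℕ) (f : ℕ → ℝ) :
    (rectDiag c r f).transpose = rectDiag r c f := by
  ext p q
  simp only [Matrix.transpose_apply, rectDiag, Matrix.of_apply]
  by_cases h : (p : ℕ) = (q : ℕ)
  · rw [if_pos h.symm, if_pos h, h]
  · rw [if_neg (fun hh => h hh.symm), if_neg h]

lemma exists_svd_aux (r c : ℕ) (hcr : c ≤ r) (Y : Matrix (Fin r) (Fin c) ℝ) :
    ∃ (A : Matrix (Fin r) (Fin r) ℝ) (B : Matrix (Fin c) (Fin c) ℝ) (τ : ℕ → ℝ),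
      A * A.transpose = 1 ∧ A.transpose * A = 1 ∧ B * B.transpose = 1 ∧
      B.transpose * B = 1 ∧ (∀ i, 0 ≤ τ i) ∧ Y = A * rectDiag r c τ * B.transpose := by
  classical
  set H : Matrix (Fin c) (Fin c) ℝ := Y.transpose * Y with hHdef
  have hHconj : H = Y.conjTranspose * Y := by
    rw [Matrix.conjTranspose_eq_transpose_of_trivial]
  have hPSD : H.PosSemidef := by rw [hHconj]; exact Matrix.posSemidef_conjTranspose_mul_self Y
  have hH : H.IsHermitian := hPSD.1
  set lam : Fin c → ℝ := hH.eigenvalues with hlam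
  have hlam0 : ∀ i, 0 ≤ lam i := fun i => hPSD.eigenvalues_nonneg i
  set B : Matrix (Fin c) (Fin c) ℝ := (Matrix.IsHermitian.eigenvectorUnitary hH :
    Matrix (Fin c) (Fin c) ℝ) with hBdef
  have hBstar : star B = B.transpose := by
    rw [Matrix.star_eq_conjTranspose, Matrix.conjTranspose_eq_transpose_of_trivial]
  have hBBt : B * B.transpose = 1 := by
    rw [← hBstar]; exact (Matrix.mem_unitaryGroup_iff).mp
      (Matrix.IsHermitian.eigenvectorUnitary hH).2
  have hBtB : B.transpose * B = 1 := mul_eq_one_comm.mp hBBt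
  have hspec : H = B * Matrix.diagonal lam * B.transpose := by
    have h0 := hH.spectral_theorem
    rw [Unitary.conjStarAlgAut_apply] at h0
    change H = B * _ * star B at h0
    rw [hBstar] at h0
    convert h0 using 3
    all_goals rfl
  set C : Matrix (Fin r) (Fin c) ℝ := Y * B with hCdef
  have hCtC : C.transpose * C = Matrix.diagonal lam := by
    rw [hCdef, Matrix.transpose_mul]
    calc B.transpose * Y.transpose * (Y * B)
        = B.transpose * (Y.transpose * Y) * B := by rw [Matrix.mul_assoc, Matrix.mul_assoc,
          Matrix.mul_assoc]
      _ = B.transpose * (B * Matrix.diagonal lam * B.transpose) * B := by rw [← hHdef, hspec]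
      _ = (B.transpose * B) * Matrix.diagonal lam * (B.transpose * B) := by
          simp only [Matrix.mul_assoc]
      _ = Matrix.diagonal lam := by rw [hBtB]; simp
  have hcol : ∀ i j : Fin c, ∑ p : Fin r, C p i * C p j = if i = j then lam i else 0 := by
    intro i j
    have : (C.transpose * C) i j = Matrix.diagonal lam i j := by rw [hCtC]
    rw [Matrix.mul_apply] at this
    simp only [Matrix.transpose_apply, Matrix.diagonal_apply] at this
    exact this
  set lam' : ℕ → ℝ := fun n => if h : n < c then lam ⟨n, h⟩ else 0 with hlam'def
  have hlam'0 : ∀ n, 0 ≤ lam' n := by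
    intro n; rw [hlam'def]; dsimp only; split
    · exact hlam0 _
    · exact le_refl 0
  set τ : ℕ → ℝ := fun n => Real.sqrt (lam' n) with hτdef
  have hτ0 : ∀ n, 0 ≤ τ n := fun n => Real.sqrt_nonneg _
  -- candidate left singular vectors
  set v : Fin r → EuclideanSpace ℝ (Fin r) :=
    fun i => WithLp.toLp 2 (fun p => (τ (i : ℕ))⁻¹ * colf (fun j => C p j) (i : ℕ)) with hvdef
  set s : Set (Fin r) := {i | lam' (i : ℕ) ≠ 0} with hsdef
  have hslt : ∀ i ∈ s, (i : ℕ) < c := by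
    intro i hi
    by_contra hge
    exact hi (dif_neg hge)
  have hv : Orthonormal ℝ (s.restrict v) := by
    rw [orthonormal_iff_ite]
    rintro ⟨i, hi⟩ ⟨j, hj⟩
    have hic := hslt i hi
    have hjc := hslt j hj
    have hinner : (inner ℝ (s.restrict v ⟨i, hi⟩) (s.restrict v ⟨j, hj⟩) : ℝ)
        = (τ (i : ℕ))⁻¹ * (τ (j : ℕ))⁻¹ *
          ∑ p : Fin r, C p ⟨(i : ℕ), hic⟩ * C p ⟨(j : ℕ), hjc⟩ := by
      rw [PiLp.inner_apply]
      rw [Finset.mul_sum]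
      refine Finset.sum_congr rfl fun p _ => ?_
      simp only [Set.restrict_apply, hvdef, RCLike.inner_apply, conj_trivial, PiLp.toLp_apply, WithLp.ofLp_toLp]
      show ((τ (j : ℕ))⁻¹ * colf (fun j => C p j) (j : ℕ)) * ((τ (i : ℕ))⁻¹ * colf (fun j => C p j) (i : ℕ)) = _
      rw [show colf (fun j => C p j) (i : ℕ) = C p ⟨(i : ℕ), hic⟩ from dif_pos hic,
        show colf (fun j => C p j) (j : ℕ) = C p ⟨(j : ℕ), hjc⟩ from dif_pos hjc]
      ring
    by_cases hij : (⟨i, hi⟩ : s) = ⟨j, hj⟩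
    · have hij' : i = j := Subtype.ext_iff.mp hij
      subst hij'
      rw [if_pos hij, hinner, hcol]
      rw [if_pos rfl]
      have hlam'i : lam' (i : ℕ) = lam ⟨(i : ℕ), hic⟩ := dif_pos hic
      have hpos : 0 < lam' (i : ℕ) := lt_of_le_of_ne (hlam'0 _) (Ne.symm hi)
      have hτpos : 0 < τ (i : ℕ) := Real.sqrt_pos.mpr hpos
      have h2 : τ (i : ℕ) * τ (i : ℕ) = lam' (i : ℕ) := Real.mul_self_sqrt (hlam'0 _)
      rw [← hlam'i, ← h2]
      field_simp
    · rw [if_neg hij, hinner, hcol, if_neg]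
      · ring
      · intro hcon
        apply hij
        apply Subtype.ext
        rw [Fin.mk.injEq] at hcon
        have hval : (i : ℕ) = (j : ℕ) := hcon
        exact Fin.ext hval
  obtain ⟨b, hb⟩ := hv.exists_orthonormalBasis_extension_of_card_eq
    (by simp [finrank_euclideanSpace])
  set A : Matrix (Fin r) (Fin r) ℝ := Matrix.of (fun p i => b i p) with hAdef
  have hAtA : A.transpose * A = 1 := by
    ext i j
    have hON := orthonormal_iff_ite.mp b.orthonormal i j
    rw [PiLp.inner_apply] at hON
    rw [Matrix.mul_apply, Matrix.one_apply]
    calc ∑ p : Fin r, A.transpose i p * A p j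
        = ∑ p : Fin r, (starRingEnd ℝ) (b i p) * b j p := by
          refine Finset.sum_congr rfl fun p _ => ?_
          simp [hAdef, Matrix.transpose_apply]
      _ = if i = j then 1 else 0 := by rw [← hON]; simp only [Real.inner_apply, conj_trivial]
  have hAAt : A * A.transpose = 1 := mul_eq_one_comm.mp hAtA
  have hCA : C = A * rectDiag r c τ := by
    ext p j
    have hjr : (j : ℕ) < r := lt_of_lt_of_le j.isLt hcr
    have hRHS : (A * rectDiag r c τ) p j = A p ⟨(j : ℕ), hjr⟩ * τ (j : ℕ) := by
      rw [Matrix.mul_apply, Finset.sum_eq_single (⟨(j : ℕ), hjr⟩ : Fin r)]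
      · rw [show rectDiag r c τ ⟨(j : ℕ), hjr⟩ j = τ (j : ℕ) from if_pos rfl]
      · intro b' _ hb'
        have hne : ¬((b' : ℕ) = (j : ℕ)) := fun hh => hb' (Fin.ext hh)
        rw [show rectDiag r c τ b' j = 0 from if_neg hne, mul_zero]
      · intro h; exact absurd (Finset.mem_univ _) h
    by_cases hz : lam' (j : ℕ) = 0
    · have hτz : τ (j : ℕ) = 0 := by
        rw [hτdef]; dsimp only; rw [hz, Real.sqrt_zero]
      rw [hRHS, hτz, mul_zero]
      have hsum : ∑ p' : Fin r, C p' j * C p' j = 0 := by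
        have h3 : lam' (j : ℕ) = lam j := by
          simp only [hlam'def]
          exact dif_pos j.isLt
        rw [hcol j j, if_pos rfl, ← h3, hz]
      have hzero := (Finset.sum_eq_zero_iff_of_nonneg
        (fun p' _ => mul_self_nonneg (C p' j))).mp hsum p (Finset.mem_univ p)
      exact mul_self_eq_zero.mp hzero
    · have hjs : (⟨(j : ℕ), hjr⟩ : Fin r) ∈ s := by
        simp only [hsdef, Set.mem_setOf_eq]; exact hz
      have hbj := hb _ hjs
      have hτpos : 0 < τ (j : ℕ) :=
        Real.sqrt_pos.mpr (lt_of_le_of_ne (hlam'0 _) (Ne.symm hz))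
      rw [hRHS]
      have hApj : A p ⟨(j : ℕ), hjr⟩ = (τ (j : ℕ))⁻¹ * C p j := by
        calc A p ⟨(j : ℕ), hjr⟩ = b ⟨(j : ℕ), hjr⟩ p := rfl
          _ = v ⟨(j : ℕ), hjr⟩ p := by rw [hbj]
          _ = (τ (j : ℕ))⁻¹ * colf (fun jj => C p jj) (j : ℕ) := rfl
          _ = (τ (j : ℕ))⁻¹ * C p j := by
              simp only [colf]
              rw [dif_pos j.isLt]
      rw [hApj]
      field_simp
  refine ⟨A, B, τ, hAAt, hAtA, hBBt, hBtB, hτ0, ?_⟩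
  calc Y = Y * (B * B.transpose) := by rw [hBBt, Matrix.mul_one]
    _ = (Y * B) * B.transpose := by rw [Matrix.mul_assoc]
    _ = A * rectDiag r c τ * B.transpose := by rw [← hCdef, hCA]

lemma exists_svd (r c : ℕ) (Y : Matrix (Fin r) (Fin c) ℝ) :
    ∃ (A : Matrix (Fin r) (Fin r) ℝ) (B : Matrix (Fin c) (Fin c) ℝ) (τ : ℕ → ℝ),
      A * A.transpose = 1 ∧ A.transpose * A = 1 ∧ B * B.transpose = 1 ∧
      B.transpose * B = 1 ∧ (∀ i, 0 ≤ τ i) ∧ Y = A * rectDiag r c τ * B.transpose := by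
  rcases le_or_gt c r with hcr | hrc
  · exact exists_svd_aux r c hcr Y
  · obtain ⟨A, B, τ, hAAt, hAtA, hBBt, hBtB, hτ0, hY⟩ :=
      exists_svd_aux c r (le_of_lt hrc) Y.transpose
    refine ⟨B, A, τ, hBBt, hBtB, hAAt, hAtA, hτ0, ?_⟩
    have := congrArg Matrix.transpose hY
    rw [Matrix.transpose_transpose] at this
    rw [this, Matrix.transpose_mul, Matrix.transpose_mul, Matrix.transpose_transpose,
      rectDiag_transpose, Matrix.mul_assoc]

end PNN

open PNN

/-- the proximal operator of the nuclear norm soft-thresholds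
the singular values. Let `N` be the nuclear norm, i.e. any function whose
value at a matrix with SVD `V diag(σ) Wᵀ` (with `V, W` orthogonal and
`σ ≥ 0`) is `∑_{i < min(r,c)} σᵢ`. If `U = V diag(σ) Wᵀ` is an SVD of `U`,
then `X = V diag(ν) Wᵀ` with `νᵢ = max (σᵢ − γ) 0` minimizes
`Y ↦ N(Y) + (1/(2γ))‖Y − U‖_F²`. -/
theorem prox_nuclear_norm_soft_thresholds_singular_values
    (r c : ℕ) (γ : ℝ) (hγ : 0 < γ)
    (N : Matrix (Fin r) (Fin c) ℝ → ℝ)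
    (hN : ∀ (V' : Matrix (Fin r) (Fin r) ℝ) (W' : Matrix (Fin c) (Fin c) ℝ)
      (σ' : ℕ → ℝ),
      V' * V'.transpose = 1 → V'.transpose * V' = 1 →
      W' * W'.transpose = 1 → W'.transpose * W' = 1 →
      (∀ i, 0 ≤ σ' i) →
      N (V' * rectDiag r c σ' * W'.transpose) = ∑ i : Fin (min r c), σ' (i : ℕ))
    (U : Matrix (Fin r) (Fin c) ℝ)
    (V : Matrix (Fin r) (Fin r) ℝ) (W : Matrix (Fin c) (Fin c) ℝ)
    (σ : ℕ → ℝ)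
    (hV : V * V.transpose = 1) (hV' : V.transpose * V = 1)
    (hW : W * W.transpose = 1) (hW' : W.transpose * W = 1)
    (hσ : ∀ i, 0 ≤ σ i)
    (hU : U = V * rectDiag r c σ * W.transpose) :
    let ν : ℕ → ℝ := fun i => max (σ i - γ) 0
    let X : Matrix (Fin r) (Fin c) ℝ := V * rectDiag r c ν * W.transpose
    ∀ Y : Matrix (Fin r) (Fin c) ℝ,
      N X + (1 / (2 * γ)) * ∑ i, ∑ j, (X i j - U i j) ^ 2
        ≤ N Y + (1 / (2 * γ)) * ∑ i, ∑ j, (Y i j - U i j) ^ 2 := by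
  intro ν X Y
  set d : ℕ → ℝ := fun i => min (σ i) γ with hddef
  have hν0 : ∀ i, 0 ≤ ν i := fun i => le_max_right _ _
  have hd0 : ∀ i, 0 ≤ d i := fun i => le_min (hσ i) hγ.le
  have hdγ : ∀ i, d i ≤ γ := fun i => min_le_right _ _
  have hNX : N X = ∑ k : Fin (min r c), ν (k : ℕ) := hN V W ν hV hV' hW hW' hν0
  obtain ⟨A, B, τ, hAAt, hAtA, hBBt, hBtB, hτ0, hY⟩ := exists_svd r c Y
  have hNY : N Y = ∑ k : Fin (min r c), τ (k : ℕ) := by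
    rw [hY]; exact hN A B τ hAAt hAtA hBBt hBtB hτ0
  -- U - X = V * rectDiag d * Wᵀ
  have hdiag : rectDiag r c σ - rectDiag r c ν = rectDiag r c d := by
    ext p q
    simp only [Matrix.sub_apply, rectDiag, Matrix.of_apply]
    by_cases h : (p : ℕ) = (q : ℕ)
    · rw [if_pos h, if_pos h, if_pos h]
      rcases le_total (σ (p : ℕ)) γ with hc | hc
      · rw [show ν (p : ℕ) = 0 from max_eq_right (by linarith),
          show d (p : ℕ) = σ (p : ℕ) from min_eq_left hc]
        ring
      · rw [show ν (p : ℕ) = σ (p : ℕ) - γ from max_eq_left (by linarith),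
          show d (p : ℕ) = γ from min_eq_right hc]
        ring
    · rw [if_neg h, if_neg h, if_neg h]; ring
  have hUX : U - X = V * rectDiag r c d * W.transpose := by
    rw [hU, show X = V * rectDiag r c ν * W.transpose from rfl,
      ← Matrix.sub_mul, ← Matrix.mul_sub, hdiag]
  -- inner products
  have hIX : ∑ p : Fin r, ∑ q : Fin c, X p q * (U p q - X p q)
      = γ * ∑ k : Fin (min r c), ν (k : ℕ) := by
    have h1 : ∑ p : Fin r, ∑ q : Fin c, X p q * (U p q - X p q)
        = ∑ p : Fin r, ∑ q : Fin c,
          (V * rectDiag r c ν * W.transpose) p q * (V * rectDiag r c d * W.transpose) p q := by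
      refine Finset.sum_congr rfl fun p _ => Finset.sum_congr rfl fun q _ => ?_
      rw [← hUX, Matrix.sub_apply]
    rw [h1, inner_same V W ν d hV' hW', Finset.mul_sum]
    refine Finset.sum_congr rfl fun k _ => ?_
    rcases le_total (σ (k : ℕ)) γ with hc | hc
    · rw [show ν (k : ℕ) = 0 from max_eq_right (by linarith)]; ring
    · rw [show d (k : ℕ) = γ from min_eq_right hc]; ring
  have hIY : ∑ p : Fin r, ∑ q : Fin c, Y p q * (U p q - X p q)
      ≤ γ * ∑ k : Fin (min r c), τ (k : ℕ) := by
    have h1 : ∑ p : Fin r, ∑ q : Fin c, Y p q * (U p q - X p q)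
        = ∑ p : Fin r, ∑ q : Fin c,
          (A * rectDiag r c τ * B.transpose) p q * (V * rectDiag r c d * W.transpose) p q := by
      refine Finset.sum_congr rfl fun p _ => Finset.sum_congr rfl fun q _ => ?_
      rw [← hUX, ← hY, Matrix.sub_apply]
    rw [h1]
    exact inner_le A V B W τ d γ hγ.le hAtA hV hBtB hW hτ0 hd0 hdγ
  -- quadratic expansion
  have hsq : ∑ p : Fin r, ∑ q : Fin c, (X p q - U p q) ^ 2
      + 2 * (∑ p : Fin r, ∑ q : Fin c, X p q * (U p q - X p q)
        - ∑ p : Fin r, ∑ q : Fin c, Y p q * (U p q - X p q))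
      ≤ ∑ p : Fin r, ∑ q : Fin c, (Y p q - U p q) ^ 2 := by
    have hpt : ∀ (p : Fin r) (q : Fin c),
        (X p q - U p q) ^ 2 + 2 * (X p q * (U p q - X p q) - Y p q * (U p q - X p q))
          ≤ (Y p q - U p q) ^ 2 := by
      intro p q
      nlinarith [sq_nonneg (Y p q - X p q)]
    calc ∑ p : Fin r, ∑ q : Fin c, (X p q - U p q) ^ 2
          + 2 * (∑ p : Fin r, ∑ q : Fin c, X p q * (U p q - X p q)
            - ∑ p : Fin r, ∑ q : Fin c, Y p q * (U p q - X p q))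
        = ∑ p : Fin r, ∑ q : Fin c, ((X p q - U p q) ^ 2
            + 2 * (X p q * (U p q - X p q) - Y p q * (U p q - X p q))) := by
          rw [← Finset.sum_sub_distrib]
          simp_rw [← Finset.sum_sub_distrib]
          rw [Finset.mul_sum]
          simp_rw [Finset.mul_sum]
          rw [← Finset.sum_add_distrib]
          refine Finset.sum_congr rfl fun p _ => ?_
          rw [← Finset.sum_add_distrib]
      _ ≤ ∑ p : Fin r, ∑ q : Fin c, (Y p q - U p q) ^ 2 :=
          Finset.sum_le_sum fun p _ => Finset.sum_le_sum fun q _ => hpt p q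
  -- assemble
  set SX := ∑ p : Fin r, ∑ q : Fin c, (X p q - U p q) ^ 2 with hSX
  set SY := ∑ p : Fin r, ∑ q : Fin c, (Y p q - U p q) ^ 2 with hSY
  have hkey : SX + 2 * γ * N X ≤ SY + 2 * γ * N Y := by
    rw [hNX, hNY]
    nlinarith [hsq, hIX, hIY]
  have h2γ : (0:ℝ) < 2 * γ := by linarith
  have hmul := mul_le_mul_of_nonneg_left hkey (le_of_lt (by positivity : (0:ℝ) < 1 / (2 * γ)))
  have he : ∀ S Nv : ℝ, (1 / (2 * γ)) * (S + 2 * γ * Nv) = Nv + (1 / (2 * γ)) * S := by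
    intro S Nv
    field_simp
    ring
  rw [he, he] at hmul
  exact hmul
end
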